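/- Let α ∈ ℂ with α ∉ ℝ. Then G is block Hankel if and only if (I_m − \bar{α}A) N_α (I_m − αA*) = (I_m − αA) N_{\bar{α}} (I_m − \bar{α}A*). -/

import Mathlib

open Matrix Complex
open scoped ComplexConjugate ComplexOrder

noncomputable section

/-- Index type for `ℂ^m` with `m = (n+1)p`, viewed as `n+1` blocks of size `p`. -/
abbrev Idx (n p : ℕ) : Type := Fin (n + 1) × Fin p

/-- The `p × m` matrix polynomial `F(λ) = [I_p, λI_p, …, λ^n I_p]`. -/
def Fm (n p : ℕ) (lam : ℂ) : Matrix (Fin p) (Idx n p) ℂ :=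
  Matrix.of fun i jk => lam ^ (jk.1 : ℕ) * (if jk.2 = i then 1 else 0)

/-- The `m × p` matrix `e_k` whose `k`-th block is `I_p` and other blocks are `0`. -/
def Ek (n p : ℕ) (k : Fin (n + 1)) : Matrix (Idx n p) (Fin p) ℂ :=
  Matrix.of fun jl i => if jl.1 = k ∧ jl.2 = i then 1 else 0

/-- The nilpotent block shift matrix `A` with blocks `A_{ij} = I_p` iff `j = i+1`. -/
def Am (n p : ℕ) : Matrix (Idx n p) (Idx n p) ℂ :=
  Matrix.of fun ia jb => if (jb.1 : ℕ) = (ia.1 : ℕ) + 1 ∧ ia.2 = jb.2 then 1 else 0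

/-- The injection matrix onto blocks 1..n. -/
def Wm (n p : ℕ) : Matrix (Idx n p) (Fin n × Fin p) ℂ :=
  Matrix.of fun jl ib => if jl.1 = ib.1.succ ∧ jl.2 = ib.2 then 1 else 0

variable {n p : ℕ}

lemma mul_Wm_apply {X : Type*} [Fintype X] (M : Matrix X (Idx n p) ℂ) (x : X)
    (i : Fin n) (b : Fin p) : (M * Wm n p) x (i, b) = M x (i.succ, b) := by
  rw [Matrix.mul_apply]
  rw [Finset.sum_eq_single ((i.succ, b) : Idx n p)]
  · simp [Wm]
  · rintro ⟨k, c⟩ _ hkc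
    simp only [Wm, Matrix.of_apply]
    rw [if_neg]
    · ring
    · rintro ⟨rfl, rfl⟩; exact hkc rfl
  · simp

lemma WmH_mul_apply {X : Type*} [Fintype X] (M : Matrix (Idx n p) X ℂ)
    (i : Fin n) (a : Fin p) (y : X) : ((Wm n p)ᴴ * M) (i, a) y = M (i.succ, a) y := by
  rw [Matrix.mul_apply]
  rw [Finset.sum_eq_single ((i.succ, a) : Idx n p)]
  · simp [Wm, conjTranspose_apply]
  · rintro ⟨k, c⟩ _ hkc
    simp only [Wm, conjTranspose_apply, Matrix.of_apply]
    rw [if_neg]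
    · simp
    · rintro ⟨rfl, rfl⟩; exact hkc rfl
  · simp

lemma WmH_Wm : (Wm n p)ᴴ * Wm n p = 1 := by
  ext ⟨i, a⟩ ⟨j, b⟩
  rw [WmH_mul_apply]
  simp only [Wm, Matrix.of_apply, Matrix.one_apply, Prod.mk.injEq]
  simp [Fin.succ_inj, eq_comm]

lemma Wm_WmH : Wm n p * (Wm n p)ᴴ = 1 - Ek n p 0 * (Ek n p 0)ᴴ := by
  ext ⟨k, c⟩ ⟨l, e⟩
  rw [Matrix.mul_apply]
  have hEk : (Ek n p 0 * (Ek n p 0)ᴴ) (k, c) (l, e)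
      = if k = 0 ∧ l = 0 ∧ c = e then 1 else 0 := by
    rw [Matrix.mul_apply]
    rw [Finset.sum_eq_single c]
    · simp only [Ek, conjTranspose_apply, Matrix.of_apply]
      by_cases hk : k = 0 <;> by_cases hl : l = 0 <;> by_cases hce : c = e <;>
        simp_all [eq_comm]
    · intro d _ hd
      simp only [Ek, conjTranspose_apply, Matrix.of_apply]
      rw [if_neg (by rintro ⟨_, rfl⟩; exact hd rfl)]
      ring
    · simp
  rw [Matrix.sub_apply, hEk]
  induction k using Fin.cases with
  | zero =>
    rw [Finset.sum_eq_zero]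
    · simp only [Matrix.sub_apply, Matrix.one_apply, Prod.mk.injEq]
      by_cases hl : l = 0 <;> by_cases hce : c = e <;> simp [hl, hce, eq_comm]
    · rintro ⟨i, a⟩ _
      simp only [Wm, Matrix.of_apply, conjTranspose_apply]
      rw [if_neg (by rintro ⟨h, _⟩; exact (Fin.succ_ne_zero i) h.symm)]
      ring
  | succ k' =>
    rw [Finset.sum_eq_single ((k', c) : Fin n × Fin p)]
    · simp only [Wm, Matrix.of_apply, conjTranspose_apply, Matrix.sub_apply,
        Matrix.one_apply, Prod.mk.injEq]
      have : ¬ (k'.succ = 0) := Fin.succ_ne_zero k'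
      by_cases hl : l = k'.succ <;> by_cases hce : c = e <;>
        simp [hl, hce, this, eq_comm]
    · rintro ⟨i, a⟩ _ hia
      simp only [Wm, Matrix.of_apply, conjTranspose_apply]
      rw [if_neg (by
        rintro ⟨h1, rfl⟩
        exact hia (by rw [Fin.succ_inj] at h1; rw [h1]))]
      ring
    · simp

lemma EkH_Wm : (Ek n p 0)ᴴ * Wm n p = 0 := by
  ext a ⟨i, b⟩
  rw [mul_Wm_apply]
  simp only [Ek, conjTranspose_apply, Matrix.of_apply, Matrix.zero_apply]
  rw [if_neg (by rintro ⟨h, _⟩; exact (Fin.succ_ne_zero i) h)]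
  simp


variable {α : ℂ}


lemma Fm_Ek : Fm n p α * Ek n p 0 = (1 : Matrix (Fin p) (Fin p) ℂ) := by
  ext i a
  rw [Matrix.mul_apply]
  rw [Finset.sum_eq_single (((0 : Fin (n+1)), a) : Idx n p)]
  · simp only [Fm, Ek, Matrix.of_apply, Matrix.one_apply]
    simp [eq_comm]
  · rintro ⟨k, c⟩ _ hkc
    simp only [Fm, Ek, Matrix.of_apply]
    rw [if_neg (show ¬(k = 0 ∧ c = a) from fun h => hkc (by rw [h.1, h.2]))]
    ring
  · simp

lemma mul_Am_zero {X : Type*} [Fintype X] (M : Matrix X (Idx n p) ℂ) (x : X) (b : Fin p) :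
    (M * Am n p) x ((0 : Fin (n+1)), b) = 0 := by
  rw [Matrix.mul_apply]
  apply Finset.sum_eq_zero
  rintro ⟨k, c⟩ _
  simp only [Am, Matrix.of_apply]
  rw [if_neg (by rintro ⟨h, _⟩; simp at h)]
  ring

lemma mul_Am_succ {X : Type*} [Fintype X] (M : Matrix X (Idx n p) ℂ) (x : X)
    (j : Fin n) (b : Fin p) : (M * Am n p) x (j.succ, b) = M x (j.castSucc, b) := by
  rw [Matrix.mul_apply]
  rw [Finset.sum_eq_single ((j.castSucc, b) : Idx n p)]
  · simp [Am, Fin.val_succ, Fin.coe_castSucc]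
  · rintro ⟨k, c⟩ _ hkc
    simp only [Am, Matrix.of_apply, Fin.val_succ]
    rw [if_neg (by
      rintro ⟨h1, rfl⟩
      apply hkc
      have : k = j.castSucc := by
        apply Fin.ext; simp only [Fin.coe_castSucc]; omega
      rw [this])]
    ring
  · simp

lemma AmH_mul_succ {X : Type*} [Fintype X] (M : Matrix (Idx n p) X ℂ)
    (i : Fin n) (a : Fin p) (y : X) :
    ((Am n p)ᴴ * M) (i.succ, a) y = M (i.castSucc, a) y := by
  rw [Matrix.mul_apply]
  rw [Finset.sum_eq_single ((i.castSucc, a) : Idx n p)]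
  · simp [Am, conjTranspose_apply, Fin.val_succ, Fin.coe_castSucc]
  · rintro ⟨k, c⟩ _ hkc
    simp only [Am, conjTranspose_apply, Matrix.of_apply, Fin.val_succ]
    rw [if_neg (by
      rintro ⟨h1, rfl⟩
      apply hkc
      have : k = i.castSucc := by
        apply Fin.ext; simp only [Fin.coe_castSucc]; omega
      rw [this])]
    simp
  · simp

lemma Fm_mul_T : Fm n p α * (1 - α • Am n p) = (Ek n p 0)ᴴ := by
  have hexp : Fm n p α * (1 - α • Am n p)
      = Fm n p α - α • (Fm n p α * Am n p) := by
    rw [Matrix.mul_sub, Matrix.mul_one, Matrix.mul_smul]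
  rw [hexp]
  ext i ⟨j, b⟩
  induction j using Fin.cases with
  | zero =>
    simp only [Matrix.sub_apply, Matrix.smul_apply, mul_Am_zero, smul_zero, sub_zero,
      Fm, Ek, Matrix.of_apply, conjTranspose_apply]
    simp [eq_comm]
  | succ j' =>
    simp only [Matrix.sub_apply, Matrix.smul_apply, mul_Am_succ, Fm, Ek,
      Matrix.of_apply, conjTranspose_apply, Fin.val_succ, Fin.coe_castSucc, smul_eq_mul]
    rw [if_neg (show ¬(j'.succ = 0 ∧ b = i) from fun hh => (Fin.succ_ne_zero j') hh.1),
      star_zero]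
    ring

lemma Am_pow_apply (k : ℕ) (i j : Fin (n+1)) (a b : Fin p) :
    (Am n p ^ k) (i, a) (j, b) = if (j : ℕ) = (i : ℕ) + k ∧ a = b then 1 else 0 := by
  induction k generalizing j b with
  | zero =>
    simp only [pow_zero, Matrix.one_apply, Prod.mk.injEq, add_zero]
    by_cases h1 : j = i <;> by_cases h2 : a = b <;>
      simp_all [Fin.ext_iff, eq_comm]
  | succ k ih =>
    rw [pow_succ]
    induction j using Fin.cases with
    | zero =>
      rw [mul_Am_zero]
      rw [if_neg (by rintro ⟨h, _⟩; simp at h)]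
    | succ j' =>
      rw [mul_Am_succ, ih]
      simp only [Fin.coe_castSucc, Fin.val_succ]
      by_cases h2 : a = b
      · simp only [h2, and_true]
        by_cases h1 : (j' : ℕ) = i + k
        · rw [if_pos h1, if_pos (by omega)]
        · rw [if_neg h1, if_neg (by omega)]
      · simp [h2]

lemma Am_pow_eq_zero : (Am n p) ^ (n + 1) = 0 := by
  ext ⟨i, a⟩ ⟨j, b⟩
  rw [Am_pow_apply]
  rw [if_neg (by rintro ⟨h, _⟩; have := j.isLt; omega)]
  simp

lemma isUnit_T (α : ℂ) : IsUnit (1 - α • Am n p) := by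
  apply IsNilpotent.isUnit_one_sub
  exact ⟨n + 1, by rw [smul_pow, Am_pow_eq_zero, smul_zero]⟩


/-- helper: cancel through a left inverse, trailing form -/
lemma cancel_left {a b c : Type*} [Fintype a] [Fintype b] [DecidableEq a]
    {X : Matrix a b ℂ} {Y : Matrix b a ℂ} (h : X * Y = 1) (Z : Matrix a c ℂ) :
    X * (Y * Z) = Z := by rw [← Matrix.mul_assoc, h, Matrix.one_mul]

lemma posDef_conj_of_leftInv {l m : Type*} [Fintype l] [Fintype m] [DecidableEq l]
    {M : Matrix m m ℂ} (hM : M.PosDef) (B : Matrix m l ℂ) (L : Matrix l m ℂ)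
    (hL : L * B = 1) : (Bᴴ * M * B).PosDef := by
  refine Matrix.PosDef.of_dotProduct_mulVec_pos (Matrix.isHermitian_conjTranspose_mul_mul B hM.1) fun x hx => ?_
  have hBx : B *ᵥ x ≠ 0 := fun h => hx (by
    have h2 := congrArg (fun v => L *ᵥ v) h
    simpa [Matrix.mulVec_mulVec, hL] using h2)
  have h3 := hM.dotProduct_mulVec_pos hBx
  simpa only [star_mulVec, dotProduct_mulVec, Matrix.vecMul_vecMul,
    Matrix.mul_assoc] using h3

/-- `N_α = Γ − ΓF(α)*(F(α)ΓF(α)*)⁻¹F(α)Γ` where `Γ = G⁻¹`. -/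
def Nm (n p : ℕ) (G : Matrix (Idx n p) (Idx n p) ℂ) (α : ℂ) : Matrix (Idx n p) (Idx n p) ℂ :=
  G⁻¹ - G⁻¹ * (Fm n p α)ᴴ * (Fm n p α * G⁻¹ * (Fm n p α)ᴴ)⁻¹ * Fm n p α * G⁻¹

lemma d_posDef {G : Matrix (Idx n p) (Idx n p) ℂ} (hG : G.PosDef) (a : ℂ) :
    ((((1 - a • Am n p) * Wm n p))ᴴ * G * ((1 - a • Am n p) * Wm n p)).PosDef := by
  have hT := isUnit_T (n := n) (p := p) a
  have hTdet := (Matrix.isUnit_iff_isUnit_det _).mp hT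
  have hT2 : (1 - a • Am n p)⁻¹ * (1 - a • Am n p) = 1 := Matrix.nonsing_inv_mul _ hTdet
  refine posDef_conj_of_leftInv hG _ ((Wm n p)ᴴ * (1 - a • Am n p)⁻¹) ?_
  rw [Matrix.mul_assoc, cancel_left hT2, WmH_Wm]

lemma Nm_eq {G : Matrix (Idx n p) (Idx n p) ℂ} (hG : G.PosDef) (α : ℂ) :
    Nm n p G α = ((1 - α • Am n p) * Wm n p) *
      ((((1 - α • Am n p) * Wm n p))ᴴ * G * ((1 - α • Am n p) * Wm n p))⁻¹ *
      (((1 - α • Am n p) * Wm n p))ᴴ := by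
  set T : Matrix (Idx n p) (Idx n p) ℂ := 1 - α • Am n p with hTdef
  set F : Matrix (Fin p) (Idx n p) ℂ := Fm n p α with hFdef
  set W : Matrix (Idx n p) (Fin n × Fin p) ℂ := Wm n p with hWdef
  set e : Matrix (Idx n p) (Fin p) ℂ := Ek n p 0 with hedef
  have hNm : Nm n p G α = G⁻¹ - G⁻¹ * Fᴴ * (F * G⁻¹ * Fᴴ)⁻¹ * F * G⁻¹ := rfl
  -- invertibility facts
  have hT := isUnit_T (n := n) (p := p) α
  have hTdet := (Matrix.isUnit_iff_isUnit_det _).mp hT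
  have hT1 : T * T⁻¹ = 1 := Matrix.mul_nonsing_inv _ hTdet
  have hT2 : T⁻¹ * T = 1 := Matrix.nonsing_inv_mul _ hTdet
  have hGdet := (Matrix.isUnit_iff_isUnit_det _).mp hG.isUnit
  have hG1 : G * G⁻¹ = 1 := Matrix.mul_nonsing_inv _ hGdet
  have hG2 : G⁻¹ * G = 1 := Matrix.nonsing_inv_mul _ hGdet
  have hFT : F * T = eᴴ := Fm_mul_T
  have hF : eᴴ * T⁻¹ = F := by rw [← hFT, Matrix.mul_assoc, hT1, Matrix.mul_one]
  have hFH : T⁻¹ᴴ * e = Fᴴ := by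
    rw [← hF, Matrix.conjTranspose_mul, Matrix.conjTranspose_conjTranspose]
  have hTH1 : T⁻¹ᴴ * Tᴴ = 1 := by
    rw [← Matrix.conjTranspose_mul, hT1, Matrix.conjTranspose_one]
  have hTH2 : Tᴴ * T⁻¹ᴴ = 1 := by
    rw [← Matrix.conjTranspose_mul, hT2, Matrix.conjTranspose_one]
  have hΔpd : (F * G⁻¹ * Fᴴ).PosDef := by
    have h0 : eᴴ * Fᴴ = 1 := by rw [← Matrix.conjTranspose_mul, Fm_Ek, Matrix.conjTranspose_one]
    have h1 := posDef_conj_of_leftInv hG.inv Fᴴ eᴴ h0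
    rwa [Matrix.conjTranspose_conjTranspose] at h1
  have hΔdet := (Matrix.isUnit_iff_isUnit_det _).mp hΔpd.isUnit
  have hΔ1 : (F * G⁻¹ * Fᴴ) * (F * G⁻¹ * Fᴴ)⁻¹ = 1 := Matrix.mul_nonsing_inv _ hΔdet
  have hΔ2 : (F * G⁻¹ * Fᴴ)⁻¹ * (F * G⁻¹ * Fᴴ) = 1 := Matrix.nonsing_inv_mul _ hΔdet
  -- structural facts
  have hWW : Wᴴ * W = 1 := WmH_Wm
  have hEW : eᴴ * W = 0 := EkH_Wm
  -- trailing-Z cancellation facts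
  have hc1 : ∀ {c : Type} (Z : Matrix (Idx n p) c ℂ), G⁻¹ * (G * Z) = Z :=
    fun Z => cancel_left hG2 Z
  have hc3 : ∀ {c : Type} (Z : Matrix (Idx n p) c ℂ), T⁻¹ * (T * Z) = Z :=
    fun Z => cancel_left hT2 Z
  have hc4 : ∀ {c : Type} (Z : Matrix (Idx n p) c ℂ), T * (T⁻¹ * Z) = Z :=
    fun Z => cancel_left hT1 Z
  have hc5 : ∀ {c : Type} (Z : Matrix (Fin n × Fin p) c ℂ), Wᴴ * (W * Z) = Z :=
    fun Z => cancel_left hWW Z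
  have hc6 : ∀ {c : Type} (Z : Matrix (Idx n p) c ℂ), T⁻¹ᴴ * (Tᴴ * Z) = Z :=
    fun Z => cancel_left hTH1 Z
  have hWWHz : ∀ {c : Type} (Z : Matrix (Idx n p) c ℂ),
      W * (Wᴴ * Z) = Z - e * (eᴴ * Z) := fun Z => by
    rw [← Matrix.mul_assoc, Wm_WmH, Matrix.sub_mul, Matrix.one_mul, Matrix.mul_assoc]
  have hFz : ∀ {c : Type} (Z : Matrix (Idx n p) c ℂ), eᴴ * (T⁻¹ * Z) = F * Z :=
    fun Z => by rw [← Matrix.mul_assoc, hF]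
  have hFHz : ∀ {c : Type} (Z : Matrix (Fin p) c ℂ), T⁻¹ᴴ * (e * Z) = Fᴴ * Z :=
    fun Z => by rw [← Matrix.mul_assoc, hFH]
  have hFTz : ∀ {c : Type} (Z : Matrix (Idx n p) c ℂ), F * (T * Z) = eᴴ * Z :=
    fun Z => by rw [← Matrix.mul_assoc, hFT]
  have hEWz : ∀ {c : Type} (Z : Matrix (Fin n × Fin p) c ℂ), eᴴ * (W * Z) = 0 :=
    fun Z => by rw [← Matrix.mul_assoc, hEW, Matrix.zero_mul]
  -- properties of Nm
  have hFS : F * Nm n p G α = 0 := by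
    rw [hNm, Matrix.mul_sub]
    have h : F * (G⁻¹ * Fᴴ * (F * G⁻¹ * Fᴴ)⁻¹ * F * G⁻¹)
        = (F * G⁻¹ * Fᴴ * (F * G⁻¹ * Fᴴ)⁻¹) * (F * G⁻¹) := by
      simp only [Matrix.mul_assoc]
    rw [h, hΔ1, Matrix.one_mul, sub_self]
  have hSFH : Nm n p G α * Fᴴ = 0 := by
    rw [hNm, Matrix.sub_mul]
    have h : G⁻¹ * Fᴴ * (F * G⁻¹ * Fᴴ)⁻¹ * F * G⁻¹ * Fᴴ
        = G⁻¹ * Fᴴ * ((F * G⁻¹ * Fᴴ)⁻¹ * (F * G⁻¹ * Fᴴ)) := by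
      simp only [Matrix.mul_assoc]
    rw [h, hΔ2, Matrix.mul_one, sub_self]
  have hSFHz : ∀ {c : Type} (Z : Matrix (Fin p) c ℂ), Nm n p G α * (Fᴴ * Z) = 0 :=
    fun Z => by rw [← Matrix.mul_assoc, hSFH, Matrix.zero_mul]
  have hSGz : ∀ {c : Type} (Z : Matrix (Idx n p) c ℂ),
      Nm n p G α * (G * Z) = Z - G⁻¹ * (Fᴴ * ((F * (G⁻¹ * Fᴴ))⁻¹ * (F * Z))) := by
    intro c Z
    rw [hNm, Matrix.sub_mul]
    simp only [Matrix.mul_assoc, hc1]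
  -- the left inverse of d
  have hCd : (Wᴴ * T⁻¹ * Nm n p G α * T⁻¹ᴴ * W) * ((T * W)ᴴ * G * (T * W)) = 1 := by
    simp only [Matrix.conjTranspose_mul, Matrix.mul_assoc, hWWHz, Matrix.mul_sub,
      Matrix.sub_mul, Matrix.mul_one, Matrix.one_mul, hc6, hFHz, hSGz, hSFHz,
      hFTz, hEW, hEWz, Matrix.mul_zero, Matrix.zero_mul, sub_zero, hc3, hc5, hc1, hc4, hWW,
      hFz, hFS]
  rw [Matrix.inv_eq_left_inv hCd]
  simp only [Matrix.conjTranspose_mul, Matrix.mul_assoc, hWWHz, Matrix.mul_sub,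
    Matrix.sub_mul, Matrix.mul_one, Matrix.one_mul, hc6, hFHz, hSGz, hSFHz,
    hFTz, hEW, hEWz, Matrix.mul_zero, Matrix.zero_mul, sub_zero, hc3, hc5, hc1, hc4, hWW,
    hFz, hFS, hTH1, hTH2]

/-- `G` is block Hankel: `g_{i+1,j} = g_{i,j+1}` for `0 ≤ i,j ≤ n−1`. -/
def BlockHankel (n p : ℕ) (G : Matrix (Idx n p) (Idx n p) ℂ) : Prop :=
  ∀ (i j : Fin n) (a b : Fin p),
    G (i.succ, a) (j.castSucc, b) = G (i.castSucc, a) (j.succ, b)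

theorem stmt5 (p n : ℕ) (hp : 0 < p) (hn : 0 < n)
    (G : Matrix (Idx n p) (Idx n p) ℂ) (hG : G.PosDef) (α : ℂ) (hα : α.im ≠ 0) :
    BlockHankel n p G ↔
      (1 - conj α • Am n p) * Nm n p G α * (1 - α • (Am n p)ᴴ) =
        (1 - α • Am n p) * Nm n p G (conj α) * (1 - conj α • (Am n p)ᴴ) := by

  have hadj : ∀ a : ℂ, (1 : Matrix (Idx n p) (Idx n p) ℂ) - a • (Am n p)ᴴ
      = (1 - (conj a) • Am n p)ᴴ := by
    intro a
    rw [Matrix.conjTranspose_sub, Matrix.conjTranspose_smul, Matrix.conjTranspose_one,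
      starRingEnd_apply, star_star]
  have hadj2 : (1 : Matrix (Idx n p) (Idx n p) ℂ) - (conj α) • (Am n p)ᴴ
      = (1 - α • Am n p)ᴴ := by rw [hadj (conj α), Complex.conj_conj]
  have hAc : ∀ a b : ℂ, (1 - a • Am n p) * (1 - b • Am n p)
      = (1 - b • Am n p) * (1 - a • Am n p) := by
    intro a b
    simp only [Matrix.mul_sub, Matrix.sub_mul, Matrix.mul_one, Matrix.one_mul,
      smul_mul_assoc, mul_smul_comm, Matrix.smul_mul, Matrix.mul_smul, smul_smul, smul_sub,
      sub_smul]
    module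
  have hnf : ∀ (a b : ℂ) (D : Matrix (Fin n × Fin p) (Fin n × Fin p) ℂ),
      (1 - a • Am n p) * (((1 - b • Am n p) * Wm n p) * D * ((1 - b • Am n p) * Wm n p)ᴴ) *
        (1 - a • Am n p)ᴴ
      = ((1 - a • Am n p) * (1 - b • Am n p)) * (Wm n p * D * (Wm n p)ᴴ) *
        ((1 - a • Am n p) * (1 - b • Am n p))ᴴ := by
    intros
    simp only [Matrix.conjTranspose_mul, Matrix.mul_assoc]
  have hdisp : (((1 - α • Am n p) * Wm n p)ᴴ * G * ((1 - α • Am n p) * Wm n p))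
      - (((1 - conj α • Am n p) * Wm n p)ᴴ * G * ((1 - conj α • Am n p) * Wm n p))
      = (α - conj α) • ((Wm n p)ᴴ * ((Am n p)ᴴ * G - G * Am n p) * Wm n p) := by
    simp only [Matrix.conjTranspose_mul, Matrix.conjTranspose_sub, Matrix.conjTranspose_smul,
      Matrix.conjTranspose_one, Matrix.mul_sub, Matrix.sub_mul, Matrix.mul_one, Matrix.one_mul,
      smul_mul_assoc, mul_smul_comm, Matrix.smul_mul, Matrix.mul_smul, smul_smul, smul_sub,
      sub_smul, starRingEnd_apply, star_star, Matrix.mul_assoc]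
    module
  have hHiff : BlockHankel n p G ↔
      (Wm n p)ᴴ * ((Am n p)ᴴ * G - G * Am n p) * Wm n p = 0 := by
    constructor
    · intro h
      ext ⟨i, a⟩ ⟨j, b⟩
      rw [mul_Wm_apply, WmH_mul_apply, Matrix.sub_apply, AmH_mul_succ, mul_Am_succ,
        Matrix.zero_apply, h i j a b, sub_self]
    · intro h i j a b
      have h2 := congrFun (congrFun h (i, a)) (j, b)
      rw [mul_Wm_apply, WmH_mul_apply, Matrix.sub_apply, AmH_mul_succ, mul_Am_succ,
        Matrix.zero_apply] at h2
      exact (sub_eq_zero.mp h2).symm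
  rw [hadj α, hadj2, Nm_eq hG α, Nm_eq hG (conj α), hnf, hnf, hAc α (conj α)]
  constructor
  · intro hH
    have hd0 : (((1 - α • Am n p) * Wm n p)ᴴ * G * ((1 - α • Am n p) * Wm n p))
        - (((1 - conj α • Am n p) * Wm n p)ᴴ * G * ((1 - conj α • Am n p) * Wm n p)) = 0 := by
      rw [hdisp, hHiff.mp hH, smul_zero]
    rw [sub_eq_zero.mp hd0]
  · intro h
    have hQunit : IsUnit ((1 - conj α • Am n p) * (1 - α • Am n p)) :=
      (isUnit_T _).mul (isUnit_T _)
    have hQdet := (Matrix.isUnit_iff_isUnit_det _).mp hQunit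
    have hQ2 : ((1 - conj α • Am n p) * (1 - α • Am n p))⁻¹ *
        ((1 - conj α • Am n p) * (1 - α • Am n p)) = 1 := Matrix.nonsing_inv_mul _ hQdet
    have hQH1 : ((1 - conj α • Am n p) * (1 - α • Am n p))ᴴ *
        (((1 - conj α • Am n p) * (1 - α • Am n p))⁻¹)ᴴ = 1 := by
      rw [← Matrix.conjTranspose_mul, hQ2, Matrix.conjTranspose_one]
    have e1 : ∀ X : Matrix (Idx n p) (Idx n p) ℂ,
        ((1 - conj α • Am n p) * (1 - α • Am n p))⁻¹ *
          (((1 - conj α • Am n p) * (1 - α • Am n p)) * X *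
            ((1 - conj α • Am n p) * (1 - α • Am n p))ᴴ) *
          (((1 - conj α • Am n p) * (1 - α • Am n p))⁻¹)ᴴ = X := by
      intro X
      have h1 : ((1 - conj α • Am n p) * (1 - α • Am n p))⁻¹ *
          (((1 - conj α • Am n p) * (1 - α • Am n p)) * X *
            ((1 - conj α • Am n p) * (1 - α • Am n p))ᴴ) *
          (((1 - conj α • Am n p) * (1 - α • Am n p))⁻¹)ᴴ
          = (((1 - conj α • Am n p) * (1 - α • Am n p))⁻¹ *
              ((1 - conj α • Am n p) * (1 - α • Am n p))) *
            (X * (((1 - conj α • Am n p) * (1 - α • Am n p))ᴴ *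
              (((1 - conj α • Am n p) * (1 - α • Am n p))⁻¹)ᴴ)) := by
        simp only [Matrix.mul_assoc]
      rw [h1, hQ2, hQH1, Matrix.one_mul, Matrix.mul_one]
    have h2 : Wm n p * ((((1 - α • Am n p) * Wm n p)ᴴ * G * ((1 - α • Am n p) * Wm n p))⁻¹)
          * (Wm n p)ᴴ
        = Wm n p * ((((1 - conj α • Am n p) * Wm n p)ᴴ * G *
            ((1 - conj α • Am n p) * Wm n p))⁻¹) * (Wm n p)ᴴ := by
      rw [← e1 (Wm n p * ((((1 - α • Am n p) * Wm n p)ᴴ * G *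
        ((1 - α • Am n p) * Wm n p))⁻¹) * (Wm n p)ᴴ), h, e1]
    have e2 : ∀ D : Matrix (Fin n × Fin p) (Fin n × Fin p) ℂ,
        (Wm n p)ᴴ * (Wm n p * D * (Wm n p)ᴴ) * Wm n p = D := by
      intro D
      have h1 : (Wm n p)ᴴ * (Wm n p * D * (Wm n p)ᴴ) * Wm n p
          = ((Wm n p)ᴴ * Wm n p) * (D * ((Wm n p)ᴴ * Wm n p)) := by
        simp only [Matrix.mul_assoc]
      rw [h1, WmH_Wm, Matrix.one_mul, Matrix.mul_one]
    have h3 : (((1 - α • Am n p) * Wm n p)ᴴ * G * ((1 - α • Am n p) * Wm n p))⁻¹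
        = (((1 - conj α • Am n p) * Wm n p)ᴴ * G * ((1 - conj α • Am n p) * Wm n p))⁻¹ := by
      rw [← e2 ((((1 - α • Am n p) * Wm n p)ᴴ * G * ((1 - α • Am n p) * Wm n p))⁻¹), h2, e2]
    have hd : (((1 - α • Am n p) * Wm n p)ᴴ * G * ((1 - α • Am n p) * Wm n p))
        = (((1 - conj α • Am n p) * Wm n p)ᴴ * G * ((1 - conj α • Am n p) * Wm n p)) := by
      have i1 := (Matrix.isUnit_iff_isUnit_det _).mp (d_posDef hG α).isUnit
      have i2 := (Matrix.isUnit_iff_isUnit_det _).mp (d_posDef hG (conj α)).isUnit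
      rw [← Matrix.nonsing_inv_nonsing_inv _ i1, h3, Matrix.nonsing_inv_nonsing_inv _ i2]
    apply hHiff.mpr
    have hne : α - conj α ≠ 0 := by
      rw [sub_ne_zero]
      intro hc
      exact hα (Complex.conj_eq_iff_im.mp hc.symm)
    have h5 := hdisp
    rw [hd, sub_self] at h5
    rcases smul_eq_zero.mp h5.symm with h6 | h6
    · exact absurd h6 hne
    · exact h6


end
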